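/- Suppose a direct sum of chains D has at most countably many trivial (singleton) components and contains an infinite sequence (C_n)_{n<ω} of non-trivial components that is increasing with respect to embeddability (C_n embeds in C_{n+1} for all n). Then D has infinitely many siblings up to isomorphism. -/

import Mathlib

open Cardinal

/-- Two preorders are equimorphic (siblings) if each order-embeds into the other. -/
def Equimorphic (α : Type*) (β : Type*) [Preorder α] [Preorder β] : Prop :=
  Nonempty (α ↪o β) ∧ Nonempty (β ↪o α)

/-- The setoid identifying order-isomorphic equimorphic substructures. -/
def sibSetoid (α : Type*) [Preorder α] : Setoid {S : Set α // Equimorphic S α} :=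
  ⟨fun S T => Nonempty ((S : Set α) ≃o (T : Set α)),
    ⟨fun _ => ⟨OrderIso.refl _⟩, fun ⟨e⟩ => ⟨e.symm⟩, fun ⟨e⟩ ⟨f⟩ => ⟨e.trans f⟩⟩⟩

/-- The sibling number of a structure: the number of isomorphism classes of
substructures equimorphic to it (every sibling is isomorphic to such a substructure). -/
noncomputable def sibNumber (α : Type*) [Preorder α] : Cardinal :=
  #(Quotient (sibSetoid α))

/- ### Auxiliary material -/

section Aux

/-- An order embedding of a sigma (disjoint-sum) order built from an injective map on
indices and fiberwise order embeddings. -/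
def sigmaOrderEmb {ι : Type*} {α : ι → Type*} [∀ i, Preorder (α i)]
    (φ : ι → ι) (hφ : Function.Injective φ) (ψ : ∀ i, α i ↪o α (φ i)) :
    (Σ i, α i) ↪o (Σ i, α i) where
  toFun x := ⟨φ x.1, ψ x.1 x.2⟩
  inj' := by
    rintro ⟨i, a⟩ ⟨j, b⟩ h
    obtain ⟨h1, h2⟩ := Sigma.mk.inj_iff.mp h
    obtain rfl := hφ h1
    obtain rfl := (ψ i).injective (eq_of_heq h2)
    rfl
  map_rel_iff' := by
    rintro ⟨i, a⟩ ⟨j, b⟩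
    constructor
    · intro h
      obtain ⟨h1, h2⟩ := Sigma.le_def.mp h
      obtain rfl := hφ h1
      exact Sigma.LE.fiber i a b ((ψ i).le_iff_le.mp h2)
    · rintro ⟨i, a, b, hab⟩
      exact Sigma.LE.fiber _ _ _ ((ψ i).le_iff_le.mpr hab)

/-- A constant map from a subsingleton preorder is an order embedding. -/
def constEmb {α β : Type*} [Preorder α] [Subsingleton α] [Preorder β] (b : β) : α ↪o β where
  toFun _ := b
  inj' x y _ := Subsingleton.elim x y
  map_rel_iff' {x y} := iff_of_true le_rfl (le_of_eq (by rw [Subsingleton.elim x y]))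

/-- Codomain restriction of an order embedding to a set containing the image. -/
def embCodRestrict {α β : Type*} [Preorder α] [Preorder β] (f : α ↪o β) (S : Set β)
    (h : ∀ a, f a ∈ S) : α ↪o S where
  toFun a := ⟨f a, h a⟩
  inj' a b hab := f.injective (congrArg Subtype.val hab)
  map_rel_iff' := f.map_rel_iff

variable (I : Type) (C : I → Type) [∀ i, LinearOrder (C i)] [∀ i, Nonempty (C i)]

/-- Casting an order embedding along an equality of indices. -/
def castEmb : ∀ {i j : I}, i = j → (C i ↪o C j)
  | _, _, rfl => (OrderIso.refl _).toOrderEmbedding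

variable (g : ℕ → I) (hinc : ∀ n, Nonempty (C (g n) ↪o C (g (n + 1))))

/-- Chain of embeddings along the increasing sequence. -/
noncomputable def embChain (n : ℕ) : ∀ j : ℕ, C (g n) ↪o C (g (n + j))
  | 0 => (OrderIso.refl _).toOrderEmbedding
  | j + 1 => (embChain n j).trans (hinc (n + j)).some

/-- Embedding between members of the increasing sequence. -/
noncomputable def embLE {n m : ℕ} (h : n ≤ m) : C (g n) ↪o C (g m) :=
  (embChain I C g hinc n (m - n)).trans
    (castEmb I C (congrArg g (Nat.add_sub_cancel' h)))

open scoped Classical in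
/-- The component map used to embed the whole sum into the sibling `Sk`. -/
noncomputable def comp (k : ℕ) (eT : {i : I | Subsingleton (C i)} → ℕ) (i : I) :
    Σ' j : I, C i ↪o C j :=
  if h : Subsingleton (C i) then
    ⟨g (k + 2 * eT ⟨i, h⟩ + 1), @constEmb _ _ _ h _ (Classical.arbitrary _)⟩
  else if h2 : ∃ n, g n = i then
    ⟨g (k + 2 * h2.choose),
      (castEmb I C h2.choose_spec.symm).trans
        (embLE I C g hinc (by omega : h2.choose ≤ k + 2 * h2.choose))⟩
  else ⟨i, (OrderIso.refl _).toOrderEmbedding⟩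

lemma comp_fst_inj (hinj : Function.Injective g) (k : ℕ)
    (eT : {i : I | Subsingleton (C i)} → ℕ) (heT : Function.Injective eT) :
    Function.Injective (fun i => (comp I C g hinc k eT i).1) := by
  intro i i' h
  dsimp only at h
  unfold comp at h
  by_cases h1 : Subsingleton (C i)
  · rw [dif_pos h1] at h
    by_cases h2 : Subsingleton (C i')
    · rw [dif_pos h2] at h
      have := hinj h
      have : eT ⟨i, h1⟩ = eT ⟨i', h2⟩ := by omega
      exact congrArg Subtype.val (heT this)
    · rw [dif_neg h2] at h
      by_cases hr' : ∃ n, g n = i'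
      · rw [dif_pos hr'] at h
        have := hinj h; omega
      · rw [dif_neg hr'] at h
        exact absurd ⟨_, h⟩ hr'
  · rw [dif_neg h1] at h
    by_cases hr : ∃ n, g n = i
    · rw [dif_pos hr] at h
      by_cases h2 : Subsingleton (C i')
      · rw [dif_pos h2] at h
        have := hinj h; omega
      · rw [dif_neg h2] at h
        by_cases hr' : ∃ n, g n = i'
        · rw [dif_pos hr'] at h
          have := hinj h
          have hn : hr.choose = hr'.choose := by omega
          rw [← hr.choose_spec, ← hr'.choose_spec, hn]
        · rw [dif_neg hr'] at h
          exact absurd ⟨_, h⟩ hr'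
    · rw [dif_neg hr] at h
      by_cases h2 : Subsingleton (C i')
      · rw [dif_pos h2] at h
        exact absurd ⟨_, h.symm⟩ hr
      · rw [dif_neg h2] at h
        by_cases hr' : ∃ n, g n = i'
        · rw [dif_pos hr'] at h
          exact absurd ⟨_, h.symm⟩ hr
        · rw [dif_neg hr'] at h
          exact h

lemma comp_fst_spec (hinj : Function.Injective g) (hnt : ∀ n, Nontrivial (C (g n)))
    (k : ℕ) (eT : {i : I | Subsingleton (C i)} → ℕ) (i : I) :
    ¬ Subsingleton (C ((comp I C g hinc k eT i).1)) ∧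
      ∀ n < k, (comp I C g hinc k eT i).1 ≠ g n := by
  unfold comp
  by_cases h1 : Subsingleton (C i)
  · rw [dif_pos h1]
    refine ⟨fun hs => (not_subsingleton_iff_nontrivial.mpr (hnt _)) hs, fun n hn hne => ?_⟩
    have := hinj hne; omega
  · rw [dif_neg h1]
    by_cases hr : ∃ n, g n = i
    · rw [dif_pos hr]
      refine ⟨fun hs => (not_subsingleton_iff_nontrivial.mpr (hnt _)) hs, fun n hn hne => ?_⟩
      have := hinj hne; omega
    · rw [dif_neg hr]
      exact ⟨h1, fun n _ hne => hr ⟨n, hne.symm⟩⟩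

/-- The `k`-th sibling: all nontrivial components except that the first `k` members of the
increasing sequence are cut down to single points, and all trivial components are removed. -/
def Sk (k : ℕ) (p : ∀ n, C (g n)) : Set (Σ i, C i) :=
  {x | (¬ Subsingleton (C x.1) ∧ ∀ n < k, x.1 ≠ g n) ∨ ∃ n, n < k ∧ x = ⟨g n, p n⟩}

/-- Comparability in the disjoint sum is having the same index. -/
lemma comparable_iff_fst_eq {x y : Σ i, C i} : (x ≤ y ∨ y ≤ x) ↔ x.1 = y.1 := by
  constructor
  · rintro (h | h)
    · exact (Sigma.le_def.mp h).1
    · exact ((Sigma.le_def.mp h).1).symm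
  · obtain ⟨i, a⟩ := x
    obtain ⟨j, b⟩ := y
    rintro (rfl : i = j)
    exact (le_total a b).imp (Sigma.LE.fiber i a b) (Sigma.LE.fiber i b a)

/-- The isolated points of a substructure of the sum: points alone in their component. -/
def isoPts (S : Set (Σ i, C i)) : Set S :=
  {x | ∀ y : S, (y : Σ i, C i).1 = (x : Σ i, C i).1 → y = x}

lemma isoPts_mapsTo {S T : Set (Σ i, C i)} (e : S ≃o T) {x : S}
    (hx : x ∈ isoPts I C S) : e x ∈ isoPts I C T := by
  intro z hz
  have key : ∀ u v : S, ((e u : Σ i, C i)).1 = ((e v : Σ i, C i)).1 ↔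
      (u : Σ i, C i).1 = (v : Σ i, C i).1 := by
    intro u v
    rw [← comparable_iff_fst_eq, ← comparable_iff_fst_eq]
    simp only [Subtype.coe_le_coe, e.le_iff_le]
  have hz' : ((e (e.symm z) : Σ i, C i)).1 = ((e x : Σ i, C i)).1 := by
    rwa [e.apply_symm_apply]
  have := hx (e.symm z) ((key (e.symm z) x).mp hz')
  rw [← e.apply_symm_apply z, this]

/-- Transport of isolated points along an order isomorphism. -/
noncomputable def isoPtsEquiv {S T : Set (Σ i, C i)} (e : S ≃o T) :
    isoPts I C S ≃ isoPts I C T :=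
  Equiv.subtypeEquiv e.toEquiv (fun x => by
    constructor
    · exact fun h => isoPts_mapsTo I C e h
    · intro h
      have := isoPts_mapsTo I C e.symm h
      simpa using this)

lemma isoPts_Sk (hinj : Function.Injective g) (k : ℕ) (p : ∀ n, C (g n)) :
    Nonempty (Fin k ≃ isoPts I C (Sk I C g k p)) := by
  have hmem : ∀ n : Fin k, (⟨g n, p n⟩ : Σ i, C i) ∈ Sk I C g k p :=
    fun n => Or.inr ⟨n, n.2, rfl⟩
  have hiso : ∀ n : Fin k,
      (⟨⟨g n, p n⟩, hmem n⟩ : Sk I C g k p) ∈ isoPts I C (Sk I C g k p) := by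
    intro n y hy
    rcases y.2 with h | ⟨m, hm, hy'⟩
    · exact absurd hy (h.2 n n.2)
    · apply Subtype.ext
      rw [hy']
      have : g m = g n := by rw [hy'] at hy; exact hy
      have hmn : m = (n : ℕ) := hinj this
      subst hmn
      rfl
  refine ⟨Equiv.ofBijective (fun n => ⟨⟨⟨g n, p n⟩, hmem n⟩, hiso n⟩) ⟨?_, ?_⟩⟩
  · intro n m h
    have h1 := congrArg Subtype.val (congrArg Subtype.val h)
    have : g (n : ℕ) = g (m : ℕ) := (Sigma.mk.inj_iff.mp h1).1
    exact Fin.ext (hinj this)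
  · rintro ⟨⟨⟨i, a⟩, hmem'⟩, hiso'⟩
    rcases hmem' with h | ⟨n, hn, hx⟩
    · exfalso
      haveI : Nontrivial (C i) := not_subsingleton_iff_nontrivial.mp h.1
      obtain ⟨b, hb⟩ := exists_ne a
      have hyb : (⟨i, b⟩ : Σ i, C i) ∈ Sk I C g k p := Or.inl h
      have := hiso' ⟨⟨i, b⟩, hyb⟩ rfl
      have hba : b = a := eq_of_heq (Sigma.mk.inj_iff.mp (congrArg Subtype.val this)).2
      exact hb hba
    · exact ⟨⟨n, hn⟩, Subtype.ext (Subtype.ext hx.symm)⟩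

include hinc in
lemma Sk_equimorphic (hinj : Function.Injective g) (hnt : ∀ n, Nontrivial (C (g n)))
    (k : ℕ) (eT : {i : I | Subsingleton (C i)} → ℕ)
    (heT : Function.Injective eT) (p : ∀ n, C (g n)) :
    Equimorphic (Sk I C g k p) (Σ i, C i) := by
  constructor
  · exact ⟨OrderEmbedding.subtype _⟩
  · refine ⟨embCodRestrict
      (sigmaOrderEmb (fun i => (comp I C g hinc k eT i).1)
        (comp_fst_inj I C g hinc hinj k eT heT)
        (fun i => (comp I C g hinc k eT i).2)) _ ?_⟩
    intro a
    exact Or.inl (comp_fst_spec I C g hinc hinj hnt k eT a.1)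

end Aux

theorem sib_infinite_of_increasing_sequence (I : Type) (C : I → Type)
    [∀ i, LinearOrder (C i)] [∀ i, Nonempty (C i)]
    (htriv : {i | Subsingleton (C i)}.Countable)
    (g : ℕ → I) (hinj : Function.Injective g)
    (hnt : ∀ n, Nontrivial (C (g n)))
    (hinc : ∀ n, Nonempty (C (g n) ↪o C (g (n + 1)))) :
    ℵ₀ ≤ sibNumber (Σ i, C i) := by
  classical
  obtain ⟨eT, heT⟩ := Set.countable_iff_exists_injective.mp htriv
  let p : ∀ n, C (g n) := fun _ => Classical.arbitrary _
  have hequi : ∀ k, Equimorphic (Sk I C g k p) (Σ i, C i) :=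
    fun k => Sk_equimorphic I C g hinc hinj hnt k eT heT p
  let q : ℕ → Quotient (sibSetoid (Σ i, C i)) :=
    fun k => Quotient.mk _ ⟨Sk I C g k p, hequi k⟩
  have hq : Function.Injective q := by
    intro k j h
    obtain ⟨e⟩ : Nonempty ((Sk I C g k p : Set _) ≃o (Sk I C g j p : Set _)) :=
      Quotient.exact h
    obtain ⟨e1⟩ := isoPts_Sk I C g hinj k p
    obtain ⟨e2⟩ := isoPts_Sk I C g hinj j p
    exact Fin.equiv_iff_eq.mp ⟨e1.trans ((isoPtsEquiv I C e).trans e2.symm)⟩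
  calc ℵ₀ = #ℕ := Cardinal.mk_nat.symm
    _ ≤ _ := Cardinal.mk_le_of_injective hq
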